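/- The encoding of LF objects into STLC terms preserves beta-reduction: if M beta-reduces to M' in LF then ⟨M⟩ beta-reduces to ⟨M'⟩ in STLC; consequently, if M is in beta-normal form then ⟨M⟩ is in beta-normal form. -/

import Mathlib

/- De Bruijn presentation of LF: kinds, types, objects (with meta-variables). -/
mutual
inductive LTy : Type where
  | const : Nat → LTy
  | pi : LTy → LTy → LTy
  | app : LTy → LObj → LTy
inductive LObj : Type where
  | const : Nat → LObj
  | var : Nat → LObj
  | mvar : Nat → LObj
  | app : LObj → LObj → LObj
  | lam : LTy → LObj → LObj
end

inductive LKind : Type where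
  | type : LKind
  | pi : LTy → LKind → LKind

mutual
def liftTy (d : Nat) : LTy → LTy
  | .const a => .const a
  | .pi A B => .pi (liftTy d A) (liftTy (d+1) B)
  | .app A M => .app (liftTy d A) (liftObj d M)
def liftObj (d : Nat) : LObj → LObj
  | .const c => .const c
  | .var k => if k < d then .var k else .var (k+1)
  | .mvar X => .mvar X
  | .app M N => .app (liftObj d M) (liftObj d N)
  | .lam A M => .lam (liftTy d A) (liftObj (d+1) M)
end

def liftKind (d : Nat) : LKind → LKind
  | .type => .type
  | .pi A K => .pi (liftTy d A) (liftKind (d+1) K)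

/- Capture-avoiding substitution of an object for de Bruijn variable d. -/
mutual
def substTy (d : Nat) (s : LObj) : LTy → LTy
  | .const a => .const a
  | .pi A B => .pi (substTy d s A) (substTy (d+1) (liftObj 0 s) B)
  | .app A M => .app (substTy d s A) (substObj d s M)
def substObj (d : Nat) (s : LObj) : LObj → LObj
  | .const c => .const c
  | .var k => if k = d then s else if d < k then .var (k-1) else .var k
  | .mvar X => .mvar X
  | .app M N => .app (substObj d s M) (substObj d s N)
  | .lam A M => .lam (substTy d s A) (substObj (d+1) (liftObj 0 s) M)
end

def substKind (d : Nat) (s : LObj) : LKind → LKind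
  | .type => .type
  | .pi A K => .pi (substTy d s A) (substKind (d+1) (liftObj 0 s) K)

/- Context lookup with the appropriate lifting. -/
inductive Lk : List LTy → Nat → LTy → Prop where
  | zero : Lk (A :: Γ) 0 (liftTy 0 A)
  | succ : Lk Γ k A → Lk (B :: Γ) (k+1) (liftTy 0 A)

/- LF typing judgments, relative to a signature (ts for kinds of type constants,
   os for types of object constants) and a meta-variable context Δ. -/
mutual
inductive WfKind (ts : Nat → LKind) (os : Nat → LTy) (Δ : Nat → LTy) :
    List LTy → LKind → Prop where
  | type : WfKind ts os Δ Γ .type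
  | pi : HasKind ts os Δ Γ A .type → WfKind ts os Δ (A :: Γ) K →
      WfKind ts os Δ Γ (.pi A K)
inductive HasKind (ts : Nat → LKind) (os : Nat → LTy) (Δ : Nat → LTy) :
    List LTy → LTy → LKind → Prop where
  | const : HasKind ts os Δ Γ (.const a) (ts a)
  | pi : HasKind ts os Δ Γ A .type → HasKind ts os Δ (A :: Γ) B .type →
      HasKind ts os Δ Γ (.pi A B) .type
  | app : HasKind ts os Δ Γ A (.pi B K) → HasTy ts os Δ Γ M B →
      HasKind ts os Δ Γ (.app A M) (substKind 0 M K)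
inductive HasTy (ts : Nat → LKind) (os : Nat → LTy) (Δ : Nat → LTy) :
    List LTy → LObj → LTy → Prop where
  | const : HasTy ts os Δ Γ (.const c) (os c)
  | var : Lk Γ k A → HasTy ts os Δ Γ (.var k) A
  | mvar : HasTy ts os Δ Γ (.mvar X) (Δ X)
  | lam : HasKind ts os Δ Γ A .type → HasTy ts os Δ (A :: Γ) M B →
      HasTy ts os Δ Γ (.lam A M) (.pi A B)
  | app : HasTy ts os Δ Γ M (.pi A B) → HasTy ts os Δ Γ N A →
      HasTy ts os Δ Γ (.app M N) (substTy 0 N B)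
end
/- Simple types with the two atomic types lf-obj and lf-type. -/
inductive STy : Type where
  | lfObj : STy
  | lfType : STy
  | arr : STy → STy → STy

/- The flattening map φ on LF types (base types go to lf-obj). -/
def phiTy : LTy → STy
  | .const _ => .lfObj
  | .app _ _ => .lfObj
  | .pi A B => .arr (phiTy A) (phiTy B)

/- The flattening map φ on LF kinds. -/
def phiKind : LKind → STy
  | .type => .lfType
  | .pi A K => .arr (phiTy A) (phiKind K)

/- Simply typed λ-terms (hohh terms), with meta-variables. -/
inductive Tm : Type where
  | const : Nat → Tm
  | var : Nat → Tm
  | mvar : Nat → Tm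
  | app : Tm → Tm → Tm
  | lam : STy → Tm → Tm

def liftTm (d : Nat) : Tm → Tm
  | .const c => .const c
  | .var k => if k < d then .var k else .var (k+1)
  | .mvar X => .mvar X
  | .app m n => .app (liftTm d m) (liftTm d n)
  | .lam τ m => .lam τ (liftTm (d+1) m)

def substTm (d : Nat) (s : Tm) : Tm → Tm
  | .const c => .const c
  | .var k => if k = d then s else if d < k then .var (k-1) else .var k
  | .mvar X => .mvar X
  | .app m n => .app (substTm d s m) (substTm d s n)
  | .lam τ m => .lam τ (substTm (d+1) (liftTm 0 s) m)

/- The lossy encoding ⟨·⟩ of LF objects as simply typed terms. -/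
def enc : LObj → Tm
  | .const c => .const c
  | .var k => .var k
  | .mvar X => .mvar X
  | .app M N => .app (enc M) (enc N)
  | .lam A M => .lam (phiTy A) (enc M)

/- STLC typing, relative to a signature cs and meta-variable typing ms. -/
inductive SHas (cs : Nat → STy) (ms : Nat → STy) : List STy → Tm → STy → Prop where
  | const : SHas cs ms Γ (.const c) (cs c)
  | var : Γ[k]? = some τ → SHas cs ms Γ (.var k) τ
  | mvar : SHas cs ms Γ (.mvar X) (ms X)
  | app : SHas cs ms Γ m (.arr τ σ) → SHas cs ms Γ n τ → SHas cs ms Γ (.app m n) σ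
  | lam : SHas cs ms (τ :: Γ) m σ → SHas cs ms Γ (.lam τ m) (.arr τ σ)

/- β-reduction on LF objects: (λx:A.M) N → M[N/x] and its compatible closure. -/
inductive OStep : LObj → LObj → Prop where
  | beta : OStep (.app (.lam A M) N) (substObj 0 N M)
  | app1 : OStep M M' → OStep (.app M N) (.app M' N)
  | app2 : OStep N N' → OStep (.app M N) (.app M N')
  | lam : OStep M M' → OStep (.lam A M) (.lam A M')

/- β-reduction on STLC terms. -/
inductive TStep : Tm → Tm → Prop where
  | beta : TStep (.app (.lam τ m) n) (substTm 0 n m)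
  | app1 : TStep m m' → TStep (.app m n) (.app m' n)
  | app2 : TStep n n' → TStep (.app m n) (.app m n')
  | lam : TStep m m' → TStep (.lam τ m) (.lam τ m')

theorem phiTy_lift (d : Nat) (A : LTy) : phiTy (liftTy d A) = phiTy A := by
  match A with
  | .const a => rfl
  | .pi A B => simp [liftTy, phiTy, phiTy_lift]
  | .app A M => rfl

theorem phiTy_subst (d : Nat) (s : LObj) (A : LTy) : phiTy (substTy d s A) = phiTy A := by
  match A with
  | .const a => rfl
  | .pi A B => simp [substTy, phiTy, phiTy_subst]
  | .app A M => rfl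

theorem enc_lift (d : Nat) (M : LObj) : enc (liftObj d M) = liftTm d (enc M) := by
  match M with
  | .const c => rfl
  | .var k => simp only [liftObj, liftTm, enc]; split <;> rfl
  | .mvar X => rfl
  | .app M N => simp [liftObj, liftTm, enc, enc_lift]
  | .lam A M => simp [liftObj, liftTm, enc, enc_lift, phiTy_lift]

theorem enc_subst (d : Nat) (s : LObj) (M : LObj) :
    enc (substObj d s M) = substTm d (enc s) (enc M) := by
  match M with
  | .const c => rfl
  | .var k =>
      simp only [substObj, substTm, enc]
      split
      · rfl
      · split <;> rfl
  | .mvar X => rfl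
  | .app M N => simp [substObj, substTm, enc, enc_subst]
  | .lam A M => simp [substObj, substTm, enc, enc_subst, enc_lift, phiTy_subst]

theorem enc_step (M M' : LObj) (h : OStep M M') : TStep (enc M) (enc M') := by
  induction h with
  | beta => rw [enc_subst]; exact TStep.beta
  | app1 _ ih => exact TStep.app1 ih
  | app2 _ ih => exact TStep.app2 ih
  | lam _ ih => exact TStep.lam ih

theorem step_back (M : LObj) (t : Tm) (h : TStep (enc M) t) : ∃ M', OStep M M' := by
  match M with
  | .const c => cases h
  | .var k => cases h
  | .mvar X => cases h
  | .app (.lam A P) N => exact ⟨_, OStep.beta⟩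
  | .app (.const c) N =>
      cases h with
      | app1 h' => cases h'
      | app2 h' => obtain ⟨N', s⟩ := step_back N _ h'; exact ⟨_, OStep.app2 s⟩
  | .app (.var k) N =>
      cases h with
      | app1 h' => cases h'
      | app2 h' => obtain ⟨N', s⟩ := step_back N _ h'; exact ⟨_, OStep.app2 s⟩
  | .app (.mvar X) N =>
      cases h with
      | app1 h' => cases h'
      | app2 h' => obtain ⟨N', s⟩ := step_back N _ h'; exact ⟨_, OStep.app2 s⟩
  | .app (.app P Q) N =>
      cases h with
      | app1 h' => obtain ⟨M', s⟩ := step_back _ _ h'; exact ⟨_, OStep.app1 s⟩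
      | app2 h' => obtain ⟨N', s⟩ := step_back N _ h'; exact ⟨_, OStep.app2 s⟩
  | .lam A M =>
      cases h with
      | lam h' => obtain ⟨M', s⟩ := step_back M _ h'; exact ⟨_, OStep.lam s⟩

/-- The encoding preserves β-reduction: if M →β M' in LF then ⟨M⟩ →β ⟨M'⟩ in
    STLC; consequently if M is β-normal then ⟨M⟩ is β-normal. -/
theorem encoding_preserves_beta_reduction :
    (∀ M M', OStep M M' → TStep (enc M) (enc M')) ∧
    (∀ M : LObj, (∀ M', ¬ OStep M M') → ∀ t, ¬ TStep (enc M) t) := by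
  refine ⟨enc_step, fun M hnf t ht => ?_⟩
  obtain ⟨M', s⟩ := step_back M t ht
  exact hnf M' s
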